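/- Let f(Σ) = tr(Σ^{-1} S) on symmetric positive definite M×M matrices with S symmetric positive definite. Then f is strictly convex along the curve Σ(t) = Σ_0^{1/2} (Σ_0^{-1/2} Σ_1 Σ_0^{-1/2})^t Σ_0^{1/2} (the geodesic between distinct Σ_0, Σ_1), i.e., geodesically strictly convex: f(Σ(t)) < (1-t)f(Σ_0) + t f(Σ_1) for t ∈ (0,1) when Σ_0 ≠ Σ_1. -/

import Mathlib

open Matrix

open scoped ComplexOrder in
/-- The positive semidefinite square root of a positive semidefinite matrix
(the definition `Matrix.PosSemidef.sqrt` of the older Mathlib, since removed). -/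
noncomputable def Matrix.PosSemidef.sqrt {n 𝕜 : Type*} [Fintype n] [RCLike 𝕜] [DecidableEq n]
    {A : Matrix n n 𝕜} (hA : A.PosSemidef) : Matrix n n 𝕜 :=
  hA.1.eigenvectorUnitary.1 * diagonal ((↑) ∘ Real.sqrt ∘ hA.1.eigenvalues) *
    (star hA.1.eigenvectorUnitary : Matrix n n 𝕜)

section Aux

lemma aux_sqrt_mul_self {n : Type*} [Fintype n] [DecidableEq n] {A : Matrix n n ℝ}
    (hA : A.PosSemidef) : hA.sqrt * hA.sqrt = A := by
  have hU : (star hA.1.eigenvectorUnitary : Matrix n n ℝ) * hA.1.eigenvectorUnitary = 1 :=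
    Unitary.coe_star_mul_self _
  rw [Matrix.PosSemidef.sqrt]
  simp only [mul_assoc]
  rw [← mul_assoc (star _ : Matrix n n ℝ) (hA.1.eigenvectorUnitary : Matrix n n ℝ), hU, one_mul,
    ← mul_assoc (diagonal _), diagonal_mul_diagonal]
  conv_rhs => rw [hA.1.spectral_theorem, Unitary.conjStarAlgAut_apply]
  rw [mul_assoc]
  congr 2
  ext i j
  by_cases h : i = j
  · subst h; simp [Real.mul_self_sqrt (hA.eigenvalues_nonneg i)]
  · simp [diagonal_apply_ne _ h]


lemma aux_conjT_posDef {n : Type*} [Fintype n] [DecidableEq n]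
    {A : Matrix n n ℝ} (hA : A.PosDef) {B : Matrix n n ℝ} (hB : IsUnit B) :
    (Bᴴ * A * B).PosDef := by
  refine PosDef.of_dotProduct_mulVec_pos (Matrix.isHermitian_conjTranspose_mul_mul B hA.1) fun x hx => ?_
  have hinj : Function.Injective (B.mulVec) :=
    Matrix.mulVec_injective_iff_isUnit.mpr hB
  have hx' : B *ᵥ x ≠ 0 := fun h => hx (hinj (by simpa using h))
  simpa only [star_mulVec, dotProduct_mulVec, vecMul_vecMul] using hA.dotProduct_mulVec_pos hx'

lemma aux_mul_conjT_posDef {n : Type*} [Fintype n] [DecidableEq n]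
    {A : Matrix n n ℝ} (hA : A.PosDef) {B : Matrix n n ℝ} (hB : IsUnit B) :
    (B * A * Bᴴ).PosDef := by
  have hB' : IsUnit Bᴴ := by rw [← star_eq_conjTranspose]; exact hB.star
  simpa only [conjTranspose_conjTranspose] using aux_conjT_posDef hA hB'

lemma aux_diag_pos {n : Type*} [Fintype n] [DecidableEq n]
    {C : Matrix n n ℝ} (hC : C.PosDef) (i : n) : 0 < C i i := by
  have := hC.dotProduct_mulVec_pos (x := Pi.single i 1) (fun h => one_ne_zero (α := ℝ) (by simpa using congrFun h i))
  simpa [dotProduct, mulVec, Pi.single_apply] using this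

lemma aux_scalar_lt {d t : ℝ} (hd : 0 < d) (ht0 : 0 < t) (ht1 : t < 1) (hd1 : d ≠ 1) :
    d ^ (-t) < (1 - t) + t * d⁻¹ := by
  have hlog : Real.log d ≠ 0 := by
    intro h
    exact hd1 (by rw [← Real.exp_log hd, h, Real.exp_zero])
  have := strictConvexOn_exp.2 (Set.mem_univ (0:ℝ)) (Set.mem_univ (-Real.log d))
    (by simpa using (neg_ne_zero.mpr hlog).symm) (by linarith : (0:ℝ) < 1 - t) ht0 (by ring)
  simp only [smul_eq_mul, mul_zero, zero_add, Real.exp_zero, mul_one] at this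
  rw [Real.exp_neg, Real.exp_log hd] at this
  rw [Real.rpow_def_of_pos hd]
  calc Real.exp (Real.log d * (-t)) = Real.exp (t * (-Real.log d)) := by ring_nf
    _ < (1-t) + t * d⁻¹ := by linarith

lemma aux_scalar_le {d t : ℝ} (hd : 0 < d) (ht0 : 0 < t) (ht1 : t < 1) :
    d ^ (-t) ≤ (1 - t) + t * d⁻¹ := by
  by_cases hd1 : d = 1
  · subst hd1; simp [Real.one_rpow]
  · exact (aux_scalar_lt hd ht0 ht1 hd1).le

end Aux

/-- `f(Σ) = tr(Σ⁻¹ S)` is strictly geodesically convex on the positive definite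
cone: along the affine-invariant geodesic
`Σ(t) = Σ₀^{1/2} (Σ₀^{-1/2} Σ₁ Σ₀^{-1/2})^t Σ₀^{1/2}` between distinct `Σ₀, Σ₁`,
one has `f(Σ(t)) < (1-t) f(Σ₀) + t f(Σ₁)` for `t ∈ (0,1)`. The matrix power is
taken via the continuous functional calculus of the Hermitian matrix
`Σ₀^{-1/2} Σ₁ Σ₀^{-1/2}`. -/
theorem trace_inv_geodesically_strictly_convex
    (M : ℕ) (hM : 1 ≤ M)
    (S S0 S1 : Matrix (Fin M) (Fin M) ℝ)
    (hS : S.PosDef) (hS0 : S0.PosDef) (hS1 : S1.PosDef)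
    (hne : S0 ≠ S1)
    (Q : Matrix (Fin M) (Fin M) ℝ) (hQ : Q = hS0.posSemidef.sqrt)
    (hG : (Q⁻¹ * S1 * Q⁻¹).IsHermitian)
    (t : ℝ) (ht : t ∈ Set.Ioo (0 : ℝ) 1) :
    ((Q * hG.cfc (fun x : ℝ => x ^ t) * Q)⁻¹ * S).trace
      < (1 - t) * (S0⁻¹ * S).trace + t * (S1⁻¹ * S).trace := by
  obtain ⟨ht0, ht1⟩ := ht
  -- Q is positive definite
  have hQQ : Q * Q = S0 := by rw [hQ]; exact aux_sqrt_mul_self hS0.posSemidef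
  have hQpd : Q.PosDef := by
    rw [hQ, Matrix.PosSemidef.sqrt, star_eq_conjTranspose]
    apply aux_mul_conjT_posDef
    · refine Matrix.PosDef.diagonal fun i => ?_
      simpa using Real.sqrt_pos.mpr (hS0.eigenvalues_pos i)
    · exact ⟨Unitary.toUnits hS0.posSemidef.isHermitian.eigenvectorUnitary, rfl⟩
  -- notation
  set V : Matrix (Fin M) (Fin M) ℝ := (hG.eigenvectorUnitary : Matrix (Fin M) (Fin M) ℝ) with hV
  set d : Fin M → ℝ := hG.eigenvalues with hd
  -- cancellation lemmas
  have hQdet : IsUnit Q.det := isUnit_iff_isUnit_det Q |>.mp hQpd.isUnit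
  have hQr : Q * Q⁻¹ = 1 := mul_nonsing_inv Q hQdet
  have hQl : Q⁻¹ * Q = 1 := nonsing_inv_mul Q hQdet
  have cQ : ∀ X : Matrix (Fin M) (Fin M) ℝ, Q * (Q⁻¹ * X) = X := fun X => by
    rw [← mul_assoc, hQr, one_mul]
  have cQ' : ∀ X : Matrix (Fin M) (Fin M) ℝ, Q⁻¹ * (Q * X) = X := fun X => by
    rw [← mul_assoc, hQl, one_mul]
  have hV1 : V * star V = 1 := Unitary.coe_mul_star_self hG.eigenvectorUnitary
  have hV2 : star V * V = 1 := Unitary.coe_star_mul_self hG.eigenvectorUnitary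
  have cV : ∀ X : Matrix (Fin M) (Fin M) ℝ, V * (star V * X) = X := fun X => by
    rw [← mul_assoc, hV1, one_mul]
  have cV' : ∀ X : Matrix (Fin M) (Fin M) ℝ, star V * (V * X) = X := fun X => by
    rw [← mul_assoc, hV2, one_mul]
  have cD : ∀ (a b : Fin M → ℝ) (X : Matrix (Fin M) (Fin M) ℝ),
      diagonal a * (diagonal b * X) = diagonal (fun i => a i * b i) * X := fun a b X => by
    rw [← mul_assoc, diagonal_mul_diagonal]
  -- hG.cfc as an explicit product
  have hcfc : ∀ f : ℝ → ℝ, hG.cfc f = V * (diagonal (fun i => f (d i)) * star V) := fun f => by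
    rw [Matrix.IsHermitian.cfc, Unitary.conjStarAlgAut_apply,
      mul_assoc (hG.eigenvectorUnitary : Matrix (Fin M) (Fin M) ℝ)]
    congr 2
  -- A is positive definite
  have hQinvH : (Q⁻¹)ᴴ = Q⁻¹ := by rw [conjTranspose_nonsing_inv, hQpd.1.eq]
  have hApd : (Q⁻¹ * S1 * Q⁻¹).PosDef := by
    have := aux_mul_conjT_posDef hS1 (hQpd.inv.isUnit)
    rwa [hQinvH] at this
  have hd_pos : ∀ i, 0 < d i := fun i => hApd.eigenvalues_pos i
  -- spectral theorem for A
  have hA_eq : Q⁻¹ * S1 * Q⁻¹ = V * (diagonal d * star V) := by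
    conv_lhs => rw [hG.spectral_theorem]
    rw [Unitary.conjStarAlgAut_apply, mul_assoc (hG.eigenvectorUnitary : Matrix (Fin M) (Fin M) ℝ)]
    congr 2
  have hS1_eq : S1 = Q * (V * (diagonal d * (star V * Q))) := by
    have h1 : Q * ((Q⁻¹ * S1 * Q⁻¹) * Q) = S1 := by
      simp only [mul_assoc, cQ, cQ', hQl, hQr, mul_one, one_mul]
    conv_lhs => rw [← h1, hA_eq]
    simp only [mul_assoc]
  -- trace formula
  have htr : ∀ (v : Fin M → ℝ) (P R : Matrix (Fin M) (Fin M) ℝ),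
      (P * (diagonal v * R)).trace = ∑ i, v i * (R * P) i i := by
    intro v P R
    rw [trace_mul_comm, mul_assoc, Matrix.trace]
    congr 1
    ext i
    simp [Matrix.diag, Matrix.diagonal_mul]
  set C : Matrix (Fin M) (Fin M) ℝ := (star V * Q⁻¹) * S * (Q⁻¹ * V) with hC
  have hCpd : C.PosDef := by
    have hBu : IsUnit (star V * Q⁻¹) := by
      exact IsUnit.mul ⟨Unitary.toUnits (star hG.eigenvectorUnitary), rfl⟩ hQpd.inv.isUnit
    have := aux_mul_conjT_posDef hS hBu
    rwa [show (star V * Q⁻¹)ᴴ = Q⁻¹ * V by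
      rw [conjTranspose_mul, ← star_eq_conjTranspose, ← star_eq_conjTranspose, star_star,
        star_eq_conjTranspose Q⁻¹, hQinvH]] at this
  have hCpos : ∀ i, 0 < C i i := fun i => aux_diag_pos hCpd i
  -- the three traces
  have Conv : ∀ v : Fin M → ℝ,
      ((Q⁻¹ * (V * (diagonal v * (star V * Q⁻¹)))) * S).trace = ∑ i, v i * C i i := by
    intro v
    have e1 : (Q⁻¹ * (V * (diagonal v * (star V * Q⁻¹)))) * S
        = (Q⁻¹ * V) * (diagonal v * ((star V * Q⁻¹) * S)) := by simp only [mul_assoc]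
    rw [e1, htr]
  -- trace 1 : the geodesic point
  have hinv1 : (Q * hG.cfc (fun x : ℝ => x ^ t) * Q)⁻¹
      = Q⁻¹ * (V * (diagonal (fun i => (d i) ^ (-t)) * (star V * Q⁻¹))) := by
    apply inv_eq_right_inv
    rw [hcfc]
    simp only [mul_assoc, cQ, cQ', cV, cV', cD]
    have : (fun i => (d i) ^ t * (d i) ^ (-t)) = fun _ => (1:ℝ) := by
      funext i
      rw [← Real.rpow_add (hd_pos i)]
      simp
    rw [this, diagonal_one, one_mul, cV, hQr]
  -- trace 2 : S0
  have hinv2 : S0⁻¹ = Q⁻¹ * (V * (diagonal (fun _ => (1:ℝ)) * (star V * Q⁻¹))) := by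
    apply inv_eq_right_inv
    rw [← hQQ]
    simp only [diagonal_one, one_mul, mul_assoc, cQ, cV, hQr]
  -- trace 3 : S1
  have hinv3 : S1⁻¹ = Q⁻¹ * (V * (diagonal (fun i => (d i)⁻¹) * (star V * Q⁻¹))) := by
    apply inv_eq_right_inv
    conv_lhs => rw [hS1_eq]
    simp only [mul_assoc, cQ, cQ', cV, cV', cD]
    have : (fun i => d i * (d i)⁻¹) = fun _ => (1:ℝ) := by
      funext i
      exact mul_inv_cancel₀ (hd_pos i).ne'
    rw [this, diagonal_one, one_mul, cV, hQr]
  rw [hinv1, hinv2, hinv3, Conv, Conv, Conv]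
  -- index where the eigenvalue differs from 1
  have hex : ∃ i, d i ≠ 1 := by
    by_contra h
    push_neg at h
    apply hne
    have hA1 : Q⁻¹ * S1 * Q⁻¹ = 1 := by
      rw [hA_eq, show diagonal d = 1 by rw [show d = fun _ => (1:ℝ) from funext h, diagonal_one],
        one_mul, hV1]
    have : S1 = Q * Q := by
      have h1 : Q * ((Q⁻¹ * S1 * Q⁻¹) * Q) = S1 := by
        simp only [mul_assoc, cQ, cQ', hQl, hQr, mul_one, one_mul]
      rw [← h1, hA1, one_mul]
    rw [this, hQQ]
  obtain ⟨i₀, hi₀⟩ := hex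
  -- final scalar inequality
  rw [Finset.mul_sum, Finset.mul_sum, ← Finset.sum_add_distrib]
  refine Finset.sum_lt_sum (fun i _ => ?_) ⟨i₀, Finset.mem_univ _, ?_⟩
  · have h1 := aux_scalar_le (hd_pos i) ht0 ht1
    have h2 := (hCpos i).le
    nlinarith
  · have h1 := aux_scalar_lt (hd_pos i₀) ht0 ht1 hi₀
    have h2 := hCpos i₀
    nlinarith
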